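/- Fix n ≥ 1, a point x⁰ ∈ ℝⁿ, and positive reals Δ₁,…,Δ_n with Δ = Δ₁⋯Δ_n and Δ_S = √(Δ₁² + ⋯ + Δ_n²). Let f : ℝⁿ → ℝ be twice continuously differentiable on an open set containing the hyperrectangle R(x⁰;d) = {x⁰ + x : 0 ≤ x_i ≤ Δ_i}, with ∇f Lipschitz continuous with constant L_{∇f} on R(x⁰;d). Define w ∈ ℝⁿ by w_i = ∫_{R(0;d)} x_i · R₁(x⁰+x) dx, where R₁(x⁰+x) = f(x⁰+x) − f(x⁰) − ∇f(x⁰)ᵀx is the first-order Taylor remainder and the integral is over the box R(0;d) = ∏_{i=1}^n [0, Δ_i]. Let D = diag(Δ₁,…,Δ_n). Then ‖D⁻¹ w‖ ≤ (√n / 8) · L_{∇f} · Δ · Δ_S². -/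

import Mathlib

open scoped BigOperators

noncomputable section

/-- Interpret a plain vector in `Fin n → ℝ` as an element of Euclidean space,
so that `‖·‖` is the Euclidean norm. -/
def vecE {n : ℕ} (v : Fin n → ℝ) : EuclideanSpace ℝ (Fin n) :=
  (EuclideanSpace.equiv (Fin n) ℝ).symm v

/-- The box `R(0;d) = ∏ᵢ [0, Δᵢ]` in Euclidean space. -/
def box {n : ℕ} (Δ : Fin n → ℝ) : Set (EuclideanSpace ℝ (Fin n)) :=
  {x | ∀ l, x l ∈ Set.Icc (0 : ℝ) (Δ l)}

open MeasureTheory Set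

section Aux

theorem pi_box_integral (n : ℕ) (s : Fin n → Set ℝ) (hs : ∀ l, MeasurableSet (s l))
    (h : Fin n → ℝ → ℝ) :
    ∫ y in Set.pi Set.univ s, ∏ l, h l (y l) = ∏ l, ∫ t in s l, h l t := by
  rw [← integral_indicator (MeasurableSet.univ_pi hs)]
  have key : ∀ y : Fin n → ℝ, (Set.pi Set.univ s).indicator (fun y => ∏ l, h l (y l)) y
      = ∏ l, (s l).indicator (h l) (y l) := by
    intro y
    by_cases hy : y ∈ Set.pi Set.univ s
    · rw [Set.indicator_of_mem hy]
      exact (Finset.prod_congr rfl fun l _ =>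
        (Set.indicator_of_mem (hy l (Set.mem_univ l)) _).symm)
    · rw [Set.indicator_of_notMem hy]
      rw [Set.mem_univ_pi] at hy
      push_neg at hy
      obtain ⟨l, hl⟩ := hy
      exact (Finset.prod_eq_zero (Finset.mem_univ l) (Set.indicator_of_notMem hl _)).symm
  simp_rw [key]
  rw [MeasureTheory.integral_fintype_prod_volume_eq_prod]
  simp_rw [integral_indicator (hs _)]

theorem box_transfer (n : ℕ) (Δ : Fin n → ℝ) (g : (Fin n → ℝ) → ℝ) :
    ∫ x in box Δ, g x = ∫ y in Set.pi Set.univ (fun l => Set.Icc (0:ℝ) (Δ l)), g y := by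
  have hmp := EuclideanSpace.volume_preserving_symm_measurableEquiv_toLp (Fin n)
  have hemb := (MeasurableEquiv.toLp 2 (Fin n → ℝ)).symm.measurableEmbedding
  have hbox : box Δ = (MeasurableEquiv.toLp 2 (Fin n → ℝ)).symm ⁻¹'
      (Set.pi Set.univ (fun l => Set.Icc (0:ℝ) (Δ l))) := by
    ext x
    simp only [box, Set.mem_setOf_eq, Set.mem_preimage, Set.mem_univ_pi]
    rfl
  rw [hbox, ← MeasurePreserving.setIntegral_preimage_emb hmp hemb g]
  rfl

theorem box_compact (n : ℕ) (Δ : Fin n → ℝ) : IsCompact (box Δ) := by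
  have hbox : box Δ = (EuclideanSpace.equiv (Fin n) ℝ).toHomeomorph ⁻¹'
      (Set.pi Set.univ (fun l => Set.Icc (0:ℝ) (Δ l))) := by
    ext x
    simp only [box, Set.mem_setOf_eq, Set.mem_preimage, Set.mem_univ_pi]
    rfl
  rw [hbox, Homeomorph.isCompact_preimage]
  exact isCompact_univ_pi (fun l => isCompact_Icc)

theorem box_measurable (n : ℕ) (Δ : Fin n → ℝ) : MeasurableSet (box Δ) :=
  (box_compact n Δ).isClosed.measurableSet

theorem icc_pow_integral (a : ℝ) (ha : 0 ≤ a) (k : ℕ) :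
    ∫ t in Set.Icc (0:ℝ) a, t ^ k = a ^ (k+1) / (k+1) := by
  rw [MeasureTheory.integral_Icc_eq_integral_Ioc, ← intervalIntegral.integral_of_le ha,
    integral_pow]
  simp

theorem box_monomial (n : ℕ) (Δ : Fin n → ℝ) (hΔ : ∀ l, 0 < Δ l) (i j : Fin n) :
    ∫ x in box Δ, x i * x j ^ 2 ≤ (∏ l, Δ l) * (Δ i * Δ j ^ 2) / 4 := by
  set pw : Fin n → ℕ := fun l => (if l = i then 1 else 0) + (if l = j then 2 else 0) with hpw
  have hfun : ∀ x : Fin n → ℝ, x i * x j ^ 2 = ∏ l, (x l) ^ (pw l) := by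
    intro x
    simp only [hpw, pow_add, Finset.prod_mul_distrib, pow_ite, pow_one, pow_zero]
    rw [Finset.prod_ite_eq', Finset.prod_ite_eq']
    simp
  have hval : ∫ x in box Δ, x i * x j ^ 2
      = ∏ l, (Δ l ^ (pw l + 1) / ((pw l : ℝ) + 1)) := by
    rw [box_transfer n Δ (fun y => y i * y j ^ 2)]
    simp_rw [hfun]
    rw [pi_box_integral n _ (fun l => measurableSet_Icc) (fun l t => t ^ pw l)]
    refine Finset.prod_congr rfl fun l _ => ?_
    rw [icc_pow_integral (Δ l) (hΔ l).le]
  have hnum : ∏ l, Δ l ^ (pw l + 1) = (∏ l, Δ l) * (Δ i * Δ j ^ 2) := by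
    simp_rw [pow_succ]
    rw [Finset.prod_mul_distrib, ← hfun Δ]
    ring
  have hden : (4:ℝ) ≤ ∏ l, ((pw l : ℝ) + 1) := by
    by_cases hij : i = j
    · subst hij
      have hh : ∀ l, ((pw l : ℝ) + 1) = (if l = i then (4:ℝ) else 1) := by
        intro l; by_cases h : l = i <;> simp [hpw, h] <;> norm_num
      simp_rw [hh]
      rw [Finset.prod_ite_eq']
      simp
    · have hh : ∀ l, ((pw l : ℝ) + 1)
          = (if l = i then (2:ℝ) else 1) * (if l = j then (3:ℝ) else 1) := by
        intro l
        by_cases h1 : l = i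
        · subst h1; simp [hpw, hij] ; norm_num
        · by_cases h2 : l = j <;> simp [hpw, h1, h2, Ne.symm hij] <;> norm_num
      simp_rw [hh]
      rw [Finset.prod_mul_distrib, Finset.prod_ite_eq', Finset.prod_ite_eq']
      simp; norm_num
  rw [hval, Finset.prod_div_distrib, hnum]
  have hprodpos : (0:ℝ) ≤ ∏ l, Δ l := Finset.prod_nonneg fun l _ => (hΔ l).le
  have hnumpos : 0 ≤ (∏ l, Δ l) * (Δ i * Δ j ^ 2) :=
    mul_nonneg hprodpos (mul_nonneg (hΔ i).le (sq_nonneg _))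
  have hdenpos : (0:ℝ) < 4 := by norm_num
  exact div_le_div_of_nonneg_left hnumpos hdenpos hden

theorem remainder_bound (n : ℕ)
    (x0 : EuclideanSpace ℝ (Fin n))
    (Δ : Fin n → ℝ)
    (f : EuclideanSpace ℝ (Fin n) → ℝ)
    (U : Set (EuclideanSpace ℝ (Fin n))) (hU : IsOpen U)
    (hsub : {y : EuclideanSpace ℝ (Fin n) | ∀ l, y l - x0 l ∈ Set.Icc (0 : ℝ) (Δ l)} ⊆ U)
    (hf : ContDiffOn ℝ 2 f U)
    (L : NNReal)
    (hlip : LipschitzOnWith L (gradient f)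
      {y : EuclideanSpace ℝ (Fin n) | ∀ l, y l - x0 l ∈ Set.Icc (0 : ℝ) (Δ l)})
    (x : EuclideanSpace ℝ (Fin n)) (hx : x ∈ box Δ) :
    |f (x0 + x) - f x0 - (inner ℝ (gradient f x0) x : ℝ)| ≤ (L : ℝ) / 2 * ‖x‖ ^ 2 := by
  set S := {y : EuclideanSpace ℝ (Fin n) | ∀ l, y l - x0 l ∈ Set.Icc (0 : ℝ) (Δ l)} with hS
  have hseg : ∀ t ∈ Set.Icc (0:ℝ) 1, x0 + t • x ∈ S := by
    intro t ht l
    have hxl := hx l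
    have h1 : (x0 + t • x) l - x0 l = t * x l := by
      simp [PiLp.add_apply, PiLp.smul_apply, smul_eq_mul]
    rw [h1]
    constructor
    · exact mul_nonneg ht.1 hxl.1
    · calc t * x l ≤ 1 * x l := mul_le_mul_of_nonneg_right ht.2 hxl.1
        _ = x l := one_mul _
        _ ≤ Δ l := hxl.2
  have hx0S : x0 ∈ S := by
    intro l; have := hx l
    simp only [sub_self]
    exact ⟨le_refl _, this.1.trans this.2⟩
  have hdiff : ∀ p ∈ U, DifferentiableAt ℝ f p := fun p hp =>
    (hf.differentiableOn (by norm_num)).differentiableAt (hU.mem_nhds hp)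
  have hderiv : ∀ t ∈ Set.Icc (0:ℝ) 1,
      HasDerivAt (fun t : ℝ => f (x0 + t • x))
        ((inner ℝ (gradient f (x0 + t • x)) x : ℝ)) t := by
    intro t ht
    have hp : x0 + t • x ∈ U := hsub (hseg t ht)
    have hfd : HasFDerivAt f (fderiv ℝ f (x0 + t • x)) (x0 + t • x) :=
      (hdiff _ hp).hasFDerivAt
    have hcurve : HasDerivAt (fun t : ℝ => x0 + t • x) x t := by
      simpa using ((hasDerivAt_id t).smul_const x).const_add x0
    have hcomp := hfd.comp_hasDerivAt t hcurve
    have heq : (inner ℝ (gradient f (x0 + t • x)) x : ℝ) = fderiv ℝ f (x0 + t • x) x := by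
      rw [gradient, InnerProductSpace.toDual_symm_apply]
    rw [heq]
    exact hcomp
  have hgradcont : ContinuousOn (gradient f) U := by
    have h1 : ContinuousOn (fderiv ℝ f) U :=
      hf.continuousOn_fderiv_of_isOpen hU (by norm_num)
    exact ((InnerProductSpace.toDual ℝ _).symm.continuous.comp_continuousOn h1 :)
  have hcurvecont : ContinuousOn (fun t : ℝ => x0 + t • x) (Set.Icc 0 1) :=
    (continuous_const.add (continuous_id.smul continuous_const)).continuousOn
  have hmaps : Set.MapsTo (fun t : ℝ => x0 + t • x) (Set.Icc 0 1) U :=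
    fun t ht => hsub (hseg t ht)
  have hφcont : ContinuousOn (fun t : ℝ => (inner ℝ (gradient f (x0 + t • x)) x : ℝ))
      (Set.Icc 0 1) :=
    ContinuousOn.inner (hgradcont.comp hcurvecont hmaps) continuousOn_const
  have hFTC : ∫ t in (0:ℝ)..1, (inner ℝ (gradient f (x0 + t • x)) x : ℝ)
      = f (x0 + x) - f x0 := by
    have h := intervalIntegral.integral_eq_sub_of_hasDerivAt
      (f := fun t : ℝ => f (x0 + t • x))
      (f' := fun t : ℝ => (inner ℝ (gradient f (x0 + t • x)) x : ℝ))
      (a := 0) (b := 1)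
      (by intro t ht; exact hderiv t (by rwa [Set.uIcc_of_le (by norm_num)] at ht))
      ((hφcont.mono (by rw [Set.uIcc_of_le]; norm_num)).intervalIntegrable)
    simpa using h
  have hconst : ∫ t in (0:ℝ)..1, (inner ℝ (gradient f x0) x : ℝ)
      = (inner ℝ (gradient f x0) x : ℝ) := by simp
  have hrem : f (x0 + x) - f x0 - (inner ℝ (gradient f x0) x : ℝ)
      = ∫ t in (0:ℝ)..1,
          ((inner ℝ (gradient f (x0 + t • x)) x : ℝ) - (inner ℝ (gradient f x0) x : ℝ)) := by
    rw [intervalIntegral.integral_sub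
      ((hφcont.mono (by rw [Set.uIcc_of_le]; norm_num)).intervalIntegrable)
      (intervalIntegrable_const), hFTC, hconst]
  have hbound : ∀ t ∈ Set.Icc (0:ℝ) 1,
      |(inner ℝ (gradient f (x0 + t • x)) x : ℝ) - (inner ℝ (gradient f x0) x : ℝ)|
        ≤ (L : ℝ) * ‖x‖ ^ 2 * t := by
    intro t ht
    have h1 : (inner ℝ (gradient f (x0 + t • x)) x : ℝ) - (inner ℝ (gradient f x0) x : ℝ)
        = (inner ℝ (gradient f (x0 + t • x) - gradient f x0) x : ℝ) := by
      rw [inner_sub_left]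
    rw [h1]
    calc |(inner ℝ (gradient f (x0 + t • x) - gradient f x0) x : ℝ)|
        ≤ ‖gradient f (x0 + t • x) - gradient f x0‖ * ‖x‖ := abs_real_inner_le_norm _ _
      _ ≤ (L : ℝ) * ‖(x0 + t • x) - x0‖ * ‖x‖ := by
          gcongr
          have h2 := hlip.dist_le_mul _ (hseg t ht) _ hx0S
          rwa [dist_eq_norm, dist_eq_norm] at h2
      _ = (L : ℝ) * ‖x‖ ^ 2 * t := by
          have h3 : ‖(x0 + t • x) - x0‖ = t * ‖x‖ := by
            rw [add_sub_cancel_left, norm_smul, Real.norm_eq_abs, abs_of_nonneg ht.1]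
          rw [h3]; ring
  have hint : |∫ t in (0:ℝ)..1,
      ((inner ℝ (gradient f (x0 + t • x)) x : ℝ) - (inner ℝ (gradient f x0) x : ℝ))|
      ≤ (L : ℝ) / 2 * ‖x‖ ^ 2 := by
    have h2 : ∫ t in (0:ℝ)..1, (L : ℝ) * ‖x‖ ^ 2 * t = (L : ℝ) / 2 * ‖x‖ ^ 2 := by
      rw [intervalIntegral.integral_const_mul, integral_id]
      ring
    rw [← h2]
    apply intervalIntegral.abs_integral_le_integral_abs (by norm_num) |>.trans
    apply intervalIntegral.integral_mono_on (by norm_num)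
    · exact ((hφcont.sub continuousOn_const).abs.mono
        (by rw [Set.uIcc_of_le] <;> norm_num)).intervalIntegrable
    · exact (continuous_const.mul continuous_id).intervalIntegrable 0 1
    · exact hbound
  rw [hrem]
  exact hint

end Aux

/-- Lemma 4.3 of the paper (general hyperrectangle): with
`wᵢ = ∫_{R(0;d)} xᵢ·R₁(x⁰+x) dx` where `R₁` is the first-order Taylor remainder
and `D = diag(Δ₁,…,Δₙ)`, one has `‖D⁻¹w‖ ≤ (√n/8)·L_{∇f}·Δ·Δ_S²`. -/
theorem Dinv_w_bound
    (n : ℕ) (hn : 1 ≤ n)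
    (x0 : EuclideanSpace ℝ (Fin n))
    (Δ : Fin n → ℝ) (hΔ : ∀ i, 0 < Δ i)
    (f : EuclideanSpace ℝ (Fin n) → ℝ)
    (U : Set (EuclideanSpace ℝ (Fin n))) (hU : IsOpen U)
    (hsub : {y : EuclideanSpace ℝ (Fin n) | ∀ l, y l - x0 l ∈ Set.Icc (0 : ℝ) (Δ l)} ⊆ U)
    (hf : ContDiffOn ℝ 2 f U)
    (L : NNReal)
    (hlip : LipschitzOnWith L (gradient f)
      {y : EuclideanSpace ℝ (Fin n) | ∀ l, y l - x0 l ∈ Set.Icc (0 : ℝ) (Δ l)})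
    (w : Fin n → ℝ)
    (hw : ∀ i, w i = ∫ x in box Δ,
        x i * (f (x0 + x) - f x0 - (inner ℝ (gradient f x0) x : ℝ))) :
    ‖vecE (fun i => w i / Δ i)‖ ≤
      (Real.sqrt n / 8) * (L : ℝ) * (∏ l, Δ l) * Real.sqrt (∑ l, (Δ l) ^ 2) ^ 2 := by
  set S := ∑ l, (Δ l) ^ 2 with hSdef
  have hSnonneg : 0 ≤ S := Finset.sum_nonneg fun l _ => sq_nonneg _
  have hprodpos : (0:ℝ) ≤ ∏ l, Δ l := Finset.prod_nonneg fun l _ => (hΔ l).le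
  set B : ℝ := (L : ℝ) * (∏ l, Δ l) * S / 8 with hBdef
  have hBnonneg : 0 ≤ B := by
    apply div_nonneg _ (by norm_num)
    exact mul_nonneg (mul_nonneg L.2 hprodpos) hSnonneg
  -- continuity facts
  have hboxS : ∀ x ∈ box Δ,
      x0 + x ∈ {y : EuclideanSpace ℝ (Fin n) | ∀ l, y l - x0 l ∈ Set.Icc (0 : ℝ) (Δ l)} := by
    intro x hx l
    have h1 : (x0 + x) l - x0 l = x l := by
      simp [PiLp.add_apply]
    rw [h1]; exact hx l
  have hfcont : ContinuousOn (fun x : EuclideanSpace ℝ (Fin n) =>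
      f (x0 + x) - f x0 - (inner ℝ (gradient f x0) x : ℝ)) (box Δ) := by
    have h1 : ContinuousOn (fun x : EuclideanSpace ℝ (Fin n) => f (x0 + x)) (box Δ) := by
      apply (hf.continuousOn).comp (continuous_const.add continuous_id).continuousOn
      intro x hx
      exact hsub (hboxS x hx)
    have h2 : ContinuousOn (fun x : EuclideanSpace ℝ (Fin n) =>
        (inner ℝ (gradient f x0) x : ℝ)) (box Δ) :=
      ContinuousOn.inner continuousOn_const continuousOn_id
    exact (h1.sub continuousOn_const).sub h2
  -- the per-coordinate bound
  have hcoord : ∀ i, |w i / Δ i| ≤ B := by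
    intro i
    have hxi_cont : ContinuousOn (fun x : EuclideanSpace ℝ (Fin n) => x i) (box Δ) := by
      exact (continuous_apply i).comp_continuousOn
        ((EuclideanSpace.equiv (Fin n) ℝ).continuous.continuousOn)
    have hF_cont : ContinuousOn (fun x : EuclideanSpace ℝ (Fin n) =>
        x i * (f (x0 + x) - f x0 - (inner ℝ (gradient f x0) x : ℝ))) (box Δ) :=
      hxi_cont.mul hfcont
    have hF_int := hF_cont.integrableOn_compact (μ := MeasureTheory.volume) (box_compact n Δ)
    have hM_cont : ContinuousOn (fun x : EuclideanSpace ℝ (Fin n) =>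
        x i * ((L:ℝ) / 2 * ‖x‖ ^ 2)) (box Δ) :=
      hxi_cont.mul (continuousOn_const.mul (continuous_norm.continuousOn.pow 2))
    have hM_int := hM_cont.integrableOn_compact (μ := MeasureTheory.volume) (box_compact n Δ)
    -- |w i| ≤ ∫ majorant
    have h1 : |w i| ≤ ∫ x in box Δ, x i * ((L:ℝ) / 2 * ‖x‖ ^ 2) := by
      rw [hw i]
      calc |∫ x in box Δ, x i * (f (x0 + x) - f x0 - (inner ℝ (gradient f x0) x : ℝ))|
          ≤ ∫ x in box Δ,
            |x i * (f (x0 + x) - f x0 - (inner ℝ (gradient f x0) x : ℝ))| := by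
            have hni := MeasureTheory.norm_integral_le_integral_norm
              (μ := volume.restrict (box Δ))
              (fun x : EuclideanSpace ℝ (Fin n) =>
                x i * (f (x0 + x) - f x0 - (inner ℝ (gradient f x0) x : ℝ)))
            simp_rw [Real.norm_eq_abs] at hni
            exact hni
        _ ≤ ∫ x in box Δ, x i * ((L:ℝ) / 2 * ‖x‖ ^ 2) := by
            apply MeasureTheory.setIntegral_mono_on hF_int.abs hM_int (box_measurable n Δ)
            intro x hx
            rw [abs_mul, abs_of_nonneg (hx i).1]
            apply mul_le_mul_of_nonneg_left _ (hx i).1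
            exact remainder_bound n x0 Δ f U hU hsub hf L hlip x hx
    -- compute/estimate the majorant integral
    have hsq : ∀ x : EuclideanSpace ℝ (Fin n), ‖x‖ ^ 2 = ∑ j, x j ^ 2 := by
      intro x
      rw [EuclideanSpace.norm_eq, Real.sq_sqrt (Finset.sum_nonneg fun j _ => sq_nonneg _)]
      exact Finset.sum_congr rfl fun j _ => by rw [Real.norm_eq_abs, sq_abs]
    have hterm_int : ∀ j : Fin n, IntegrableOn
        (fun x : EuclideanSpace ℝ (Fin n) => x i * x j ^ 2) (box Δ) := by
      intro j
      have hxj_cont : ContinuousOn (fun x : EuclideanSpace ℝ (Fin n) => x j) (box Δ) :=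
        (continuous_apply j).comp_continuousOn
          ((EuclideanSpace.equiv (Fin n) ℝ).continuous.continuousOn)
      exact (hxi_cont.mul (hxj_cont.pow 2)).integrableOn_compact (μ := MeasureTheory.volume) (box_compact n Δ)
    have h2 : ∫ x in box Δ, x i * ((L:ℝ) / 2 * ‖x‖ ^ 2)
        = (L:ℝ) / 2 * ∑ j, ∫ x in box Δ, x i * x j ^ 2 := by
      have heq : ∀ x : EuclideanSpace ℝ (Fin n),
          x i * ((L:ℝ) / 2 * ‖x‖ ^ 2) = (L:ℝ) / 2 * ∑ j, x i * x j ^ 2 := by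
        intro x
        rw [hsq x]
        simp only [Finset.mul_sum]
        exact Finset.sum_congr rfl fun j _ => by ring
      simp_rw [heq]
      rw [MeasureTheory.integral_const_mul, MeasureTheory.integral_finset_sum]
      exact fun j _ => hterm_int j
    have h3 : ∑ j, ∫ x in box Δ, x i * x j ^ 2 ≤ (∏ l, Δ l) * Δ i * S / 4 := by
      calc ∑ j, ∫ x in box Δ, x i * x j ^ 2
          ≤ ∑ j, (∏ l, Δ l) * (Δ i * Δ j ^ 2) / 4 :=
            Finset.sum_le_sum fun j _ => box_monomial n Δ hΔ i j
        _ = (∏ l, Δ l) * Δ i * S / 4 := by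
            rw [hSdef, Finset.mul_sum, Finset.sum_div]
            exact Finset.sum_congr rfl fun j _ => by ring
    have h4 : |w i| ≤ (L:ℝ) * (∏ l, Δ l) * Δ i * S / 8 := by
      calc |w i| ≤ ∫ x in box Δ, x i * ((L:ℝ) / 2 * ‖x‖ ^ 2) := h1
        _ = (L:ℝ) / 2 * ∑ j, ∫ x in box Δ, x i * x j ^ 2 := h2
        _ ≤ (L:ℝ) / 2 * ((∏ l, Δ l) * Δ i * S / 4) := by
            apply mul_le_mul_of_nonneg_left h3 (by positivity)
        _ = (L:ℝ) * (∏ l, Δ l) * Δ i * S / 8 := by ring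
    rw [abs_div, abs_of_pos (hΔ i), div_le_iff₀ (hΔ i)]
    calc |w i| ≤ (L:ℝ) * (∏ l, Δ l) * Δ i * S / 8 := h4
      _ = B * Δ i := by rw [hBdef]; ring
  -- conclude via the Euclidean norm
  have hnorm : ‖vecE (fun i => w i / Δ i)‖ = Real.sqrt (∑ i, (w i / Δ i) ^ 2) := by
    rw [EuclideanSpace.norm_eq]
    congr 1
    exact Finset.sum_congr rfl fun i _ => by
      rw [Real.norm_eq_abs, sq_abs]; rfl
  rw [hnorm]
  have hsum : ∑ i, (w i / Δ i) ^ 2 ≤ (n : ℝ) * B ^ 2 := by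
    calc ∑ i, (w i / Δ i) ^ 2 ≤ ∑ _i : Fin n, B ^ 2 := by
          apply Finset.sum_le_sum
          intro i _
          rw [← sq_abs]
          exact pow_le_pow_left₀ (abs_nonneg _) (hcoord i) 2
      _ = (n : ℝ) * B ^ 2 := by
          rw [Finset.sum_const, Finset.card_univ, Fintype.card_fin, nsmul_eq_mul]
  calc Real.sqrt (∑ i, (w i / Δ i) ^ 2)
      ≤ Real.sqrt ((n : ℝ) * B ^ 2) := Real.sqrt_le_sqrt hsum
    _ = Real.sqrt n * B := by
        rw [Real.sqrt_mul (Nat.cast_nonneg n), Real.sqrt_sq hBnonneg]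
    _ = (Real.sqrt n / 8) * (L : ℝ) * (∏ l, Δ l) * Real.sqrt (∑ l, (Δ l) ^ 2) ^ 2 := by
        rw [Real.sq_sqrt hSnonneg, hBdef]
        ring

end
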